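/- Let r ≥ 2 be an integer and let n ≥ r + 1 be a positive integer. Define the positive real number q by the equation n = q² + q + r - 1. Then cp(n, r) ≥ C(n, r)/C(q + r - 1, r), where C(x, r) = x(x-1)···(x-r+1)/r! denotes the generalized binomial coefficient for real x. -/

import Mathlib

/-- A clique partition of the `r`-element subsets of `[n]`: a collection of
proper subsets of `[n]` such that every `r`-element subset is contained in
exactly one member. -/
def IsCliquePartition (n r : ℕ) (P : Finset (Finset (Fin n))) : Prop :=
  (∀ A ∈ P, A ≠ Finset.univ) ∧
  ∀ S : Finset (Fin n), S.card = r → ∃! A, A ∈ P ∧ S ⊆ A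

/-- `cp n r` is the minimum size of a clique partition of the `r`-subsets of `[n]`. -/
noncomputable def cp (n r : ℕ) : ℕ :=
  sInf {t | ∃ P : Finset (Finset (Fin n)), IsCliquePartition n r P ∧ P.card = t}

/-- Generalized binomial coefficient `C(x, r) = x(x-1)⋯(x-r+1)/r!` for real `x`. -/
noncomputable def rbinom (x : ℝ) (r : ℕ) : ℝ :=
  (∏ i ∈ Finset.range r, (x - i)) / (Nat.factorial r)

section Aux

open Finset

set_option linter.unusedSectionVars false

/-- properties of `x ↦ ∏_{j<k} (x+j)` on `[0,∞)`. -/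
lemma prodShift_props (k : ℕ) :
    ConvexOn ℝ (Set.Ici 0) (fun x : ℝ => ∏ j ∈ range k, (x + j)) ∧
    MonotoneOn (fun x : ℝ => ∏ j ∈ range k, (x + j)) (Set.Ici 0) ∧
    (∀ x : ℝ, x ∈ Set.Ici (0:ℝ) → 0 ≤ ∏ j ∈ range k, (x + j)) := by
  induction k with
  | zero =>
    refine ⟨?_, ?_, ?_⟩ <;> simp [convexOn_const, monotoneOn_const, zero_le_one]
    exact convexOn_const 1 (convex_Ici 0)
    -- may need fixing
  | succ k ih =>
    obtain ⟨hc, hm, h0⟩ := ih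
    have haffc : ConvexOn ℝ (Set.Ici (0:ℝ)) (fun x : ℝ => x + k) :=
      (convexOn_id (convex_Ici 0)).add_const _
    have haffm : MonotoneOn (fun x : ℝ => x + (k:ℝ)) (Set.Ici 0) :=
      fun a _ b _ hab => by simpa using add_le_add_right hab (k:ℝ)
    have haff0 : ∀ x : ℝ, x ∈ Set.Ici (0:ℝ) → 0 ≤ x + (k:ℝ) := fun x hx => by
      have : (0:ℝ) ≤ x := hx
      positivity
    have key : (fun x : ℝ => ∏ j ∈ range (k+1), (x + j)) =
        (fun x : ℝ => ∏ j ∈ range k, (x + j)) * (fun x : ℝ => x + k) := by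
      funext x; simp [prod_range_succ]
    refine ⟨?_, ?_, ?_⟩
    · rw [key]
      exact hc.mul haffc (fun x hx => h0 x hx) (fun x hx => haff0 x hx)
        (hm.monovaryOn haffm)
    · rw [key]
      intro a ha b hb hab
      simp only [Pi.mul_apply]
      exact mul_le_mul (hm ha hb hab) (haffm ha hb hab) (haff0 a ha) (h0 b hb)
    · intro x hx
      rw [prod_range_succ]
      exact mul_nonneg (h0 x hx) (haff0 x hx)

variable {V : Type} [Fintype V] [DecidableEq V]

/-- clique partition over an arbitrary ground type. -/
def IsCP (r : ℕ) (P : Finset (Finset V)) : Prop :=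
  (∀ A ∈ P, A ≠ Finset.univ) ∧
  ∀ S : Finset V, S.card = r → ∃! A, A ∈ P ∧ S ⊆ A

lemma pair_line (P : Finset (Finset V)) (hP : IsCP 2 P) {a b : V} (hab : a ≠ b) :
    ∃! L, L ∈ P ∧ a ∈ L ∧ b ∈ L := by
  obtain ⟨L, ⟨hLP, hsub⟩, huniq⟩ := hP.2 {a, b} (by rw [card_insert_of_notMem (by simp [hab]), card_singleton])
  refine ⟨L, ⟨hLP, hsub (by simp), hsub (by simp)⟩, ?_⟩
  rintro M ⟨hMP, haM, hbM⟩
  exact huniq M ⟨hMP, by intro x hx; simp at hx; rcases hx with h|h <;> simp [h, haM, hbM]⟩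

/-- de Bruijn–Erdős: a clique partition of the pairs of `V` (|V| ≥ 3) has at least |V| members. -/
lemma dbe (P : Finset (Finset V)) (hP : IsCP 2 P) (hn : 3 ≤ Fintype.card V) :
    Fintype.card V ≤ P.card := by
  classical
  set n := Fintype.card V with hn_def
  set t := P.card with ht_def
  by_contra htlt
  push_neg at htlt
  -- degrees
  set d : V → ℕ := fun p => (P.filter (fun L => p ∈ L)).card with hd_def
  -- L1 : p ∉ L → L.card ≤ d p
  have L1 : ∀ p : V, ∀ L ∈ P, p ∉ L → L.card ≤ d p := by
    intro p L hL hpL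
    have hmap : ∀ a ∈ L, ∃ M, M ∈ P ∧ p ∈ M ∧ a ∈ M := by
      intro a ha
      have hpa : p ≠ a := fun h => hpL (h ▸ ha)
      obtain ⟨M, hM, _⟩ := pair_line P hP hpa
      exact ⟨M, hM⟩
    choose f hf using hmap
    have : L.card ≤ (P.filter (fun L => p ∈ L)).card := by
      apply Finset.card_le_card_of_injOn (fun a => if h : a ∈ L then f a h else ∅)
      · intro a ha
        simp only [mem_coe] at ha; simp only [ha, dif_pos, mem_coe, mem_filter]
        exact ⟨(hf a ha).1, (hf a ha).2.1⟩
      · intro a ha b hb hfab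
        simp only [mem_coe] at ha hb
        simp only [ha, hb, dif_pos] at hfab
        by_contra hne
        -- the pair {a,b} lies in f a ha and in L
        have hpa : p ≠ a := fun h => hpL (h ▸ ha)
        have hfa := hf a ha
        have hfb := hf b hb
        have hbfa : b ∈ f a ha := by rw [hfab]; exact hfb.2.2
        -- uniqueness for pair {a,b}: f a ha = L
        obtain ⟨M, _, huniq⟩ := pair_line P hP (show a ≠ b from hne)
        have h1 : f a ha = M := huniq _ ⟨hfa.1, hfa.2.2, hbfa⟩
        have h2 : L = M := huniq _ ⟨hL, ha, hb⟩
        rw [h1, ← h2] at hfa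
        exact hpL hfa.2.1
    exact this
  -- L4 : lines are small
  have L4 : ∀ L ∈ P, L.card < n := by
    intro L hL
    exact Finset.card_lt_card (lt_of_le_of_ne (subset_univ L) (hP.1 L hL)) |>.trans_le (by simp [hn_def])
  -- L3 : d p ≥ 1
  have L3 : ∀ p : V, 1 ≤ d p := by
    intro p
    obtain ⟨q, hq⟩ : ∃ q : V, q ≠ p := by
      have : 1 < Fintype.card V := by omega
      exact Fintype.exists_ne_of_one_lt_card this p
    obtain ⟨L, ⟨hL, hpL, hqL⟩, _⟩ := pair_line P hP hq.symm
    exact Finset.card_pos.mpr ⟨L, by simp [hd_def, hL, hpL]⟩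
  -- L2 : d p < t
  have L2 : ∀ p : V, d p < t := by
    intro p
    have hex : ∃ L ∈ P, p ∉ L := by
      by_contra hall
      push_neg at hall
      -- all lines contain p; derive a line equai to univ
      obtain ⟨a, ha⟩ : ∃ a : V, a ≠ p := Fintype.exists_ne_of_one_lt_card (by omega) p
      obtain ⟨b, hbpa⟩ : ∃ b : V, b ∉ ({p, a} : Finset V) := by
        by_contra hall2
        push_neg at hall2
        have : (univ : Finset V) ⊆ {p, a} := fun x _ => hall2 x
        have hcard := Finset.card_le_card this
        have h2 : ({p, a} : Finset V).card ≤ 2 := (card_insert_le _ _).trans (by simp)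
        simp only [card_univ] at hcard
        omega
      simp only [mem_insert, mem_singleton, not_or] at hbpa
      obtain ⟨hbp, hba⟩ := hbpa
      obtain ⟨L₀, ⟨hL₀, haL₀, hbL₀⟩, _⟩ := pair_line P hP (Ne.symm hba)
      have hpL₀ : p ∈ L₀ := hall L₀ hL₀
      have huniv : L₀ = univ := by
        apply Finset.eq_univ_of_forall
        intro c
        by_cases hcp : c = p
        · rw [hcp]; exact hpL₀
        by_cases hca : c = a
        · rw [hca]; exact haL₀
        obtain ⟨M, ⟨hM, haM, hcM⟩, _⟩ := pair_line P hP (fun h => hca h.symm)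
        have hpM : p ∈ M := hall M hM
        -- M and L₀ share the pair {p, a}
        obtain ⟨K, _, huniqK⟩ := pair_line P hP (Ne.symm ha)
        have h1 : M = K := huniqK _ ⟨hM, hpM, haM⟩
        have h2 : L₀ = K := huniqK _ ⟨hL₀, hpL₀, haL₀⟩
        rw [h1, ← h2] at hcM
        exact hcM
      exact hP.1 L₀ hL₀ huniv
    obtain ⟨L, hL, hpL⟩ := hex
    apply Finset.card_lt_card
    rw [Finset.ssubset_iff_of_subset (filter_subset _ _)]
    exact ⟨L, hL, by simp [hpL]⟩
  -- Conway's counting argument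
  have hP_ne : P.Nonempty := by
    obtain ⟨p⟩ : Nonempty V := Fintype.card_pos_iff.mp (by omega)
    have := L3 p
    rw [hd_def] at this
    obtain ⟨L, hL⟩ := Finset.card_pos.mp this
    exact ⟨L, (mem_filter.mp hL).1⟩
  have ht1 : 1 ≤ t := Finset.card_pos.mpr hP_ne
  set Q : Finset (Finset V × V) := (P ×ˢ univ).filter (fun z => z.2 ∉ z.1) with hQ_def
  have hQ_ne : Q.Nonempty := by
    obtain ⟨L, hL⟩ := hP_ne
    obtain ⟨p, hp⟩ := Finset.not_subset.mp (fun hsub => hP.1 L hL (Finset.eq_univ_of_forall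
      (fun x => hsub (mem_univ x))))
    exact ⟨(L, p), by simp [hQ_def, hL, hp.2]⟩
  set f : Finset V × V → ℝ := fun z => 1 / ((t : ℝ) * ((n : ℝ) - z.1.card)) with hf_def
  set g : Finset V × V → ℝ := fun z => 1 / ((n : ℝ) * ((t : ℝ) - d z.2)) with hg_def
  have hsf : ∑ z ∈ Q, f z = 1 := by
    rw [hQ_def, Finset.sum_filter, Finset.sum_product]
    have : ∀ L ∈ P, (∑ p ∈ univ, if (L, p).2 ∉ (L, p).1 then f (L, p) else 0) = 1 / t := by
      intro L hL
      rw [← Finset.sum_filter]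
      have hfilt : univ.filter (fun p => p ∉ (L, p).1) = Lᶜ := by
        ext p; simp
      have hconst : ∀ a ∈ Lᶜ, f (L, a) = 1 / ((t:ℝ) * ((n:ℝ) - L.card)) := fun a _ => rfl
      rw [hfilt, Finset.sum_congr rfl hconst, Finset.sum_const, Finset.card_compl, nsmul_eq_mul]
      have hLn : L.card < n := L4 L hL
      have h1 : ((n - L.card : ℕ) : ℝ) = (n : ℝ) - L.card := by
        push_cast [Nat.cast_sub hLn.le]; ring
      rw [h1]
      have h2 : (n : ℝ) - L.card ≠ 0 := by
        have : (L.card : ℝ) < n := by exact_mod_cast hLn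
        linarith
      have h3 : (t : ℝ) ≠ 0 := by positivity -- t ≥ 1? fix
      field_simp
    rw [Finset.sum_congr rfl this, Finset.sum_const, nsmul_eq_mul]
    have h3 : (t : ℝ) ≠ 0 := by
      have : (0:ℕ) < t := ht1
      positivity
    field_simp
    rfl
  have hsg : ∑ z ∈ Q, g z = 1 := by
    have hswap : ∑ z ∈ Q, g z = ∑ p ∈ univ, ∑ L ∈ P, if p ∉ L then g (L, p) else 0 := by
      rw [hQ_def, Finset.sum_filter, Finset.sum_product]
      exact Finset.sum_comm
    rw [hswap]
    have : ∀ p ∈ (univ : Finset V), (∑ L ∈ P, if p ∉ L then g (L, p) else 0) = 1 / n := by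
      intro p _
      rw [← Finset.sum_filter]
      have hconst : ∀ L ∈ P.filter (fun L => p ∉ L), g (L, p) = 1 / ((n:ℝ) * ((t:ℝ) - d p)) :=
        fun L _ => rfl
      rw [Finset.sum_congr rfl hconst, Finset.sum_const, nsmul_eq_mul]
      have hcard : (P.filter (fun L => p ∉ L)).card = t - d p := by
        rw [hd_def]
        rw [Finset.filter_not, Finset.card_sdiff_of_subset (Finset.filter_subset _ _)]
      rw [hcard]
      have hdp : d p < t := L2 p
      have h1 : ((t - d p : ℕ) : ℝ) = (t : ℝ) - d p := by
        push_cast [Nat.cast_sub hdp.le]; ring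
      rw [h1]
      have h2 : (t : ℝ) - d p ≠ 0 := by
        have : ((d p : ℝ)) < t := by exact_mod_cast hdp
        linarith
      have h3 : (n : ℝ) ≠ 0 := by
        have : (0:ℕ) < n := by omega
        positivity
      field_simp
    rw [Finset.sum_congr rfl this, Finset.sum_const, nsmul_eq_mul]
    have h3 : (n : ℝ) ≠ 0 := by
      have : (0:ℕ) < n := by omega
      positivity
    rw [card_univ]
    field_simp
    rfl
  -- pointwise strict inequality
  have hlt : ∑ z ∈ Q, f z < ∑ z ∈ Q, g z := by
    apply Finset.sum_lt_sum_of_nonempty hQ_ne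
    rintro ⟨L, p⟩ hz
    rw [hQ_def, mem_filter, mem_product] at hz
    obtain ⟨⟨hL, -⟩, hpL⟩ := hz
    simp only [hf_def, hg_def]
    have hdp : d p < t := L2 p
    have hLd : L.card ≤ d p := L1 p L hL hpL
    have hLn : L.card < n := L4 L hL
    have hd1 : 1 ≤ d p := L3 p
    have key : t * L.card < n * d p := by
      calc t * L.card ≤ t * d p := Nat.mul_le_mul_left t hLd
        _ < n * d p := by
          apply Nat.mul_lt_mul_of_lt_of_le htlt (le_refl _)
          omega
    have keyR : (t : ℝ) * L.card < (n : ℝ) * d p := by exact_mod_cast key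
    have h1 : (0:ℝ) < (n : ℝ) * ((t : ℝ) - d p) := by
      have h1a : (0:ℝ) < (n:ℝ) := by
        have : (0:ℕ) < n := by omega
        exact_mod_cast this
      have h1b : ((d p : ℝ)) < t := by exact_mod_cast hdp
      have : (0:ℝ) < (t:ℝ) - d p := by linarith
      positivity
    have h2 : (n : ℝ) * ((t : ℝ) - d p) < (t : ℝ) * ((n : ℝ) - L.card) := by
      ring_nf
      nlinarith [keyR]
    exact one_div_lt_one_div_of_lt h1 h2
  rw [hsf, hsg] at hlt
  exact lt_irrefl _ hlt

lemma sum_choose (r : ℕ) (P : Finset (Finset V)) (hP : IsCP r P) :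
    ∑ A ∈ P, (A.card.choose r) = (Fintype.card V).choose r := by
  classical
  have hcover : (univ : Finset V).powersetCard r = P.biUnion (fun A => A.powersetCard r) := by
    ext S
    simp only [mem_powersetCard, mem_biUnion]
    constructor
    · rintro ⟨-, hcard⟩
      obtain ⟨A, ⟨hA, hSA⟩, -⟩ := hP.2 S hcard
      exact ⟨A, hA, hSA, hcard⟩
    · rintro ⟨A, -, -, hcard⟩
      exact ⟨subset_univ S, hcard⟩
  have hdisj : ∀ A ∈ P, ∀ B ∈ P, A ≠ B →
      Disjoint (A.powersetCard r) (B.powersetCard r) := by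
    intro A hA B hB hAB
    rw [Finset.disjoint_left]
    intro S hSA hSB
    rw [mem_powersetCard] at hSA hSB
    obtain ⟨M, -, huniq⟩ := hP.2 S hSA.2
    exact hAB ((huniq A ⟨hA, hSA.1⟩).trans (huniq B ⟨hB, hSB.1⟩).symm)
  have := congrArg Finset.card hcover
  rw [Finset.card_powersetCard, Finset.card_biUnion hdisj] at this
  rw [card_univ] at this
  rw [this]
  apply Finset.sum_congr rfl
  intro A _
  rw [Finset.card_powersetCard]

lemma sum_card_eq (P : Finset (Finset V)) :
    ∑ A ∈ P, A.card = ∑ x : V, (P.filter (fun A => x ∈ A)).card := by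
  classical
  have h1 : ∀ A ∈ P, A.card = ∑ x : V, if x ∈ A then 1 else 0 := by
    intro A _
    rw [Finset.sum_boole, Finset.filter_mem_eq_inter, Finset.univ_inter]
    exact_mod_cast rfl
  rw [Finset.sum_congr rfl h1, Finset.sum_comm]
  apply Finset.sum_congr rfl
  intro x _
  rw [Finset.card_filter]

-- link lemma
lemma link_isCP (r : ℕ) (P : Finset (Finset V)) (hP : IsCP (r+1) P) (x : V) :
    IsCP r ((P.filter (fun A => x ∈ A)).image
      (fun A => A.subtype (fun y => y ≠ x))) := by
  classical
  constructor
  · intro A' hA'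
    obtain ⟨A, hA, rfl⟩ := Finset.mem_image.mp hA'
    rw [mem_filter] at hA
    obtain ⟨z, hz⟩ := Finset.not_subset.mp
      (fun hsub => hP.1 A hA.1 (Finset.eq_univ_of_forall (fun y => hsub (mem_univ y))))
    intro huniv
    have hzx : z ≠ x := fun h => hz.2 (h ▸ hA.2)
    have : (⟨z, hzx⟩ : {y : V // y ≠ x}) ∈ A.subtype (fun y => y ≠ x) := by
      rw [huniv]; exact mem_univ _
    rw [Finset.mem_subtype] at this
    exact hz.2 this
  · intro S' hS'
    set T : Finset V := insert x (S'.map (Function.Embedding.subtype _)) with hT_def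
    have hxnot : x ∉ S'.map (Function.Embedding.subtype _) := by
      simp only [Finset.mem_map, Function.Embedding.coe_subtype]
      rintro ⟨⟨y, hy⟩, -, h⟩
      exact hy h
    have hTcard : T.card = r + 1 := by
      rw [hT_def, Finset.card_insert_of_notMem hxnot, Finset.card_map, hS']
    obtain ⟨A, ⟨hA, hTA⟩, huniq⟩ := hP.2 T hTcard
    have hxA : x ∈ A := hTA (by rw [hT_def]; exact mem_insert_self _ _)
    refine ⟨A.subtype (fun y => y ≠ x), ⟨Finset.mem_image.mpr ⟨A, mem_filter.mpr ⟨hA, hxA⟩, rfl⟩, ?_⟩, ?_⟩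
    · intro s hs
      rw [Finset.mem_subtype]
      apply hTA
      rw [hT_def]
      apply mem_insert_of_mem
      exact Finset.mem_map.mpr ⟨s, hs, rfl⟩
    · rintro B' ⟨hB', hSB'⟩
      obtain ⟨B, hB, rfl⟩ := Finset.mem_image.mp hB'
      rw [mem_filter] at hB
      have hTB : T ⊆ B := by
        rw [hT_def]
        apply Finset.insert_subset hB.2
        intro y hy
        obtain ⟨s, hs, rfl⟩ := Finset.mem_map.mp hy
        have := hSB' hs
        rwa [Finset.mem_subtype] at this
      rw [huniq B ⟨hB.1, hTB⟩]

lemma link_card (P : Finset (Finset V)) (x : V) :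
    ((P.filter (fun A => x ∈ A)).image (fun A => A.subtype (fun y => y ≠ x))).card
      = (P.filter (fun A => x ∈ A)).card := by
  apply Finset.card_image_of_injOn
  intro A hA B hB hAB
  simp only [coe_filter, Set.mem_setOf_eq] at hA hB
  simp only at hAB
  ext y
  by_cases hy : y = x
  · subst hy; simp [hA.2, hB.2]
  · constructor
    · intro hyA
      have : (⟨y, hy⟩ : {z : V // z ≠ x}) ∈ A.subtype (fun z => z ≠ x) := by
        rw [Finset.mem_subtype]; exact hyA
      rw [hAB] at this
      rwa [Finset.mem_subtype] at this
    · intro hyB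
      have : (⟨y, hy⟩ : {z : V // z ≠ x}) ∈ B.subtype (fun z => z ≠ x) := by
        rw [Finset.mem_subtype]; exact hyB
      rw [← hAB] at this
      rwa [Finset.mem_subtype] at this

lemma g_cast (r m : ℕ) :
    ∏ j ∈ range (r+1), (((m - r : ℕ) : ℝ) + j)
      = ((m - r : ℕ) : ℝ) * (m.choose r : ℝ) * (r.factorial : ℝ) := by
  rcases lt_or_ge m r with h | h
  · rw [Nat.sub_eq_zero_of_le h.le, Nat.choose_eq_zero_of_lt h]
    rw [Finset.prod_range_succ']
    simp
  · set s := m - r with hs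
    have hsm : (s:ℝ) + r = m := by
      rw [hs]; push_cast [Nat.cast_sub h]; ring
    rw [Finset.prod_range_succ']
    have hprod : ∏ j ∈ range r, ((s:ℝ) + ↑(j+1)) = (m.choose r : ℝ) * r.factorial := by
      have h1 : ∏ j ∈ range r, ((s:ℝ) + ↑(j+1)) = ∏ i ∈ range r, ((m:ℝ) - i) := by
        rw [← Finset.prod_range_reflect]
        apply Finset.prod_congr rfl
        intro i hi
        rw [mem_range] at hi
        have hcast : ((r - 1 - i : ℕ) : ℝ) = (r:ℝ) - 1 - i := by
          have : i ≤ r - 1 := by omega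
          push_cast [Nat.cast_sub this, Nat.cast_sub (by omega : 1 ≤ r)]
          ring
        have hcast2 : ((r - 1 - i + 1 : ℕ) : ℝ) = (r:ℝ) - i := by
          push_cast [hcast]; ring
        rw [hcast2]
        linarith [hsm]
      have h2 : ∏ i ∈ range r, ((m:ℝ) - i) = (m.descFactorial r : ℝ) := by
        rw [Nat.descFactorial_eq_prod_range]
        push_cast
        apply Finset.prod_congr rfl
        intro i hi
        rw [Nat.cast_sub (le_trans (Nat.le_of_lt (mem_range.mp hi)) h)]
      rw [h1, h2, Nat.descFactorial_eq_factorial_mul_choose]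
      push_cast; ring
    rw [hprod]
    push_cast
    ring

lemma shift_prod (m k : ℕ) (h : k ≤ m) :
    ∏ j ∈ range (k+1), (((m - k : ℕ) : ℝ) + j) = ∏ i ∈ range (k+1), ((m:ℝ) - i) := by
  rw [← Finset.prod_range_reflect]
  apply Finset.prod_congr rfl
  intro i hi
  rw [mem_range] at hi
  have h1 : ((k + 1 - 1 - i : ℕ) : ℝ) = (k:ℝ) - i := by
    have : i ≤ k := by omega
    push_cast [Nat.cast_sub this]
    ring
  have h2 : ((m - k : ℕ) : ℝ) = (m:ℝ) - k := by
    push_cast [Nat.cast_sub h]; ring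
  rw [h1, h2]
  ring

lemma main_bound (r : ℕ) (hr : 2 ≤ r) :
    ∀ (V : Type) [Fintype V] [DecidableEq V] (P : Finset (Finset V)),
    IsCP r P → r + 1 ≤ Fintype.card V → ∀ q : ℝ, 0 < q →
    ((Fintype.card V : ℝ) = q^2 + q + r - 1) →
    ∏ i ∈ range r, ((Fintype.card V : ℝ) - i) ≤ (P.card : ℝ) * ∏ j ∈ range r, (q + j) := by
  induction r, hr using Nat.le_induction with
  | base =>
    intro V _ _ P hP hn q hq hnq
    set n := Fintype.card V with hn_def
    have hdbe : (n:ℝ) ≤ P.card := by exact_mod_cast dbe P hP hn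
    have hq2 : q^2 + q = (n:ℝ) - 1 := by
      rw [hnq]; push_cast; ring
    have h1 : ∏ i ∈ range 2, ((n:ℝ) - i) = (n:ℝ) * ((n:ℝ) - 1) := by
      simp [Finset.prod_range_succ]
    have h2 : ∏ j ∈ range 2, (q + j) = (n:ℝ) - 1 := by
      simp [Finset.prod_range_succ]
      nlinarith [hq2]
    rw [h1, h2]
    have hn1 : (0:ℝ) ≤ (n:ℝ) - 1 := by
      have : (3:ℝ) ≤ n := by exact_mod_cast hn
      linarith
    exact mul_le_mul_of_nonneg_right hdbe hn1
  | succ r hr IH =>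
    intro V _ _ P hP hn q hq hnq
    classical
    set n := Fintype.card V with hn_def
    have hnq' : (n:ℝ) = q^2 + q + r := by rw [hnq]; push_cast; ring
    set t := P.card with ht_def
    set d : V → ℕ := fun x => (P.filter (fun A => x ∈ A)).card with hd_def
    set Qr : ℝ := ∏ j ∈ range r, (q + j) with hQr_def
    have hQr_pos : 0 < Qr := by
      rw [hQr_def]
      apply Finset.prod_pos
      intro j _
      positivity
    -- degree lower bound from IH on links
    have hdeg : ∀ x : V, ∏ i ∈ range r, (((n:ℝ) - 1) - i) ≤ (d x : ℝ) * Qr := by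
      intro x
      have hcard' : Fintype.card {y : V // y ≠ x} = n - 1 := by
        rw [Fintype.card_subtype]
        rw [Finset.filter_ne' univ x, Finset.card_erase_of_mem (mem_univ x), card_univ]
      have hn' : r + 1 ≤ Fintype.card {y : V // y ≠ x} := by omega
      have hnq'' : ((Fintype.card {y : V // y ≠ x} : ℕ) : ℝ) = q^2 + q + r - 1 := by
        rw [hcard']
        have : ((n - 1 : ℕ) : ℝ) = (n:ℝ) - 1 := by
          push_cast [Nat.cast_sub (by omega : 1 ≤ n)]; ring
        rw [this]; linarith [hnq']
      have := IH {y : V // y ≠ x} ((P.filter (fun A => x ∈ A)).image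
        (fun A => A.subtype (fun y => y ≠ x))) (link_isCP r P hP x) hn' q hq hnq''
      rw [link_card P x] at this
      have hc : ((Fintype.card {y : V // y ≠ x} : ℕ) : ℝ) = (n:ℝ) - 1 := by
        rw [hnq'']; linarith [hnq']
      rw [hc] at this
      exact this
    -- t positive
    have hP_ne : P.Nonempty := by
      obtain ⟨S, -, hScard⟩ := Finset.exists_subset_card_eq (le_trans (by omega) (card_univ (α := V)).ge : r + 1 ≤ (univ : Finset V).card)
      obtain ⟨A, ⟨hA, -⟩, -⟩ := hP.2 S hScard
      exact ⟨A, hA⟩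
    have ht_pos : 0 < t := Finset.card_pos.mpr hP_ne
    have htR : (0:ℝ) < t := by exact_mod_cast ht_pos
    -- counting identity
    have H1 : ∑ A ∈ P, (A.card.choose (r+1)) = n.choose (r+1) := sum_choose (r+1) P hP
    have H2 : ∑ A ∈ P, (A.card - r) * A.card.choose r = (n - r) * n.choose r := by
      have hpt : ∀ m : ℕ, (m.choose r) * (m - r) = m.choose (r+1) * (r+1) :=
        fun m => (Nat.choose_succ_right_eq m r).symm
      calc ∑ A ∈ P, (A.card - r) * A.card.choose r
          = ∑ A ∈ P, A.card.choose (r+1) * (r+1) := by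
            apply Finset.sum_congr rfl
            intro A _
            rw [mul_comm, hpt]
        _ = (∑ A ∈ P, A.card.choose (r+1)) * (r+1) := by rw [Finset.sum_mul]
        _ = n.choose (r+1) * (r+1) := by rw [H1]
        _ = (n - r) * n.choose r := by rw [← hpt, mul_comm]
    -- real sum identity
    set g : ℝ → ℝ := fun x => ∏ j ∈ range (r+1), (x + j) with hg_def
    set sfun : Finset V → ℝ := fun A => ((A.card - r : ℕ) : ℝ) with hsfun_def
    set PN : ℝ := ∏ i ∈ range (r+1), ((n:ℝ) - i) with hPN_def
    have HG : ∑ A ∈ P, g (sfun A) = PN := by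
      have hptw : ∀ A ∈ P, g (sfun A)
          = (((A.card - r) * A.card.choose r : ℕ) : ℝ) * (r.factorial : ℝ) := by
        intro A _
        have h0 : g (sfun A) = ∏ j ∈ range (r+1), (((A.card - r : ℕ) : ℝ) + j) := rfl
        rw [h0, g_cast]
        push_cast; ring
      rw [Finset.sum_congr rfl hptw, ← Finset.sum_mul, ← Nat.cast_sum]
      rw [H2]
      have : (((n - r) * n.choose r : ℕ) : ℝ) * (r.factorial : ℝ)
          = ∏ j ∈ range (r+1), (((n - r : ℕ) : ℝ) + j) := by
        rw [g_cast]; push_cast; ring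
      rw [this, hPN_def, shift_prod n r (by omega)]
    -- Jensen
    set σ : ℝ := (∑ A ∈ P, sfun A) / t with hσ_def
    have hσ_nonneg : 0 ≤ σ := by
      rw [hσ_def]
      apply div_nonneg _ htR.le
      apply Finset.sum_nonneg
      intro A _
      rw [hsfun_def]
      positivity
    have HJ : t * g σ ≤ PN := by
      obtain ⟨hconv, -, -⟩ := prodShift_props (r+1)
      have hw : ∀ A ∈ P, (0:ℝ) ≤ 1 / t := fun _ _ => by positivity
      have hw1 : ∑ _A ∈ P, (1:ℝ) / t = 1 := by
        rw [Finset.sum_const, nsmul_eq_mul]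
        field_simp
        rfl
      have hmem : ∀ A ∈ P, sfun A ∈ Set.Ici (0:ℝ) := by
        intro A _
        rw [hsfun_def]
        simp only [Set.mem_Ici]
        positivity
      have := hconv.map_sum_le hw hw1 hmem
      have hσeq : ∑ A ∈ P, (1/(t:ℝ)) • sfun A = σ := by
        simp only [smul_eq_mul]
        rw [← Finset.mul_sum, hσ_def]
        ring
      rw [hσeq] at this
      have hRHS : ∑ A ∈ P, (1/(t:ℝ)) • g (sfun A) = PN / t := by
        simp only [smul_eq_mul]
        rw [← Finset.mul_sum, HG]
        ring
      rw [hRHS] at this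
      calc t * g σ ≤ t * (PN / t) := by
            apply mul_le_mul_of_nonneg_left _ htR.le
            exact this
        _ = PN := by field_simp
    -- degree sum bound
    have HD : PN ≤ t * (σ + r) * Qr := by
      have hsum_deg : (n:ℝ) * ∏ i ∈ range r, (((n:ℝ) - 1) - i) ≤ (∑ x : V, (d x : ℝ)) * Qr := by
        calc (n:ℝ) * ∏ i ∈ range r, (((n:ℝ) - 1) - i)
            = ∑ _x : V, ∏ i ∈ range r, (((n:ℝ) - 1) - i) := by
              rw [Finset.sum_const, nsmul_eq_mul, card_univ]
          _ ≤ ∑ x : V, (d x : ℝ) * Qr := Finset.sum_le_sum (fun x _ => hdeg x)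
          _ = (∑ x : V, (d x : ℝ)) * Qr := by rw [Finset.sum_mul]
      have hPN_split : PN = (n:ℝ) * ∏ i ∈ range r, (((n:ℝ) - 1) - i) := by
        rw [hPN_def, Finset.prod_range_succ']
        have : ∀ i ∈ range r, ((n:ℝ) - ↑(i+1)) = (((n:ℝ) - 1) - i) := by
          intro i _; push_cast; ring
        rw [Finset.prod_congr rfl this]
        simp [mul_comm]
      have hdsum : ∑ x : V, (d x : ℝ) = ∑ A ∈ P, (A.card : ℝ) := by
        rw [← Nat.cast_sum, ← Nat.cast_sum, sum_card_eq]
      have hcard_le : ∑ A ∈ P, (A.card : ℝ) ≤ t * (σ + r) := by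
        have hpt : ∀ A ∈ P, (A.card : ℝ) ≤ sfun A + r := by
          intro A _
          show (A.card : ℝ) ≤ ((A.card - r : ℕ) : ℝ) + (r : ℝ)
          have : A.card ≤ (A.card - r) + r := by omega
          exact_mod_cast this
        calc ∑ A ∈ P, (A.card : ℝ) ≤ ∑ A ∈ P, (sfun A + r) := Finset.sum_le_sum hpt
          _ = (∑ A ∈ P, sfun A) + t * r := by
              rw [Finset.sum_add_distrib, Finset.sum_const, nsmul_eq_mul]
          _ = t * σ + t * r := by
              rw [hσ_def]
              field_simp
          _ = t * (σ + r) := by ring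
      rw [hPN_split]
      calc (n:ℝ) * ∏ i ∈ range r, (((n:ℝ) - 1) - i)
          ≤ (∑ x : V, (d x : ℝ)) * Qr := hsum_deg
        _ = (∑ A ∈ P, (A.card : ℝ)) * Qr := by rw [hdsum]
        _ ≤ (t * (σ + r)) * Qr := by
            apply mul_le_mul_of_nonneg_right hcard_le hQr_pos.le
    -- σ ≤ q
    have hσq : σ ≤ q := by
      by_contra hlt
      push_neg at hlt
      have hprodlt : Qr < ∏ j ∈ range r, (σ + j) := by
        rw [hQr_def]
        apply Finset.prod_lt_prod_of_nonempty
        · intro j _; positivity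
        · intro j _; linarith
        · exact ⟨0, mem_range.mpr (by omega)⟩
      have hgσ : g σ = (∏ j ∈ range r, (σ + j)) * (σ + r) := by
        have h0 : g σ = ∏ j ∈ range (r+1), (σ + j) := rfl
        rw [h0, Finset.prod_range_succ]
      have h1 : t * g σ ≤ t * (σ + r) * Qr := le_trans HJ HD
      have hσr_pos : (0:ℝ) < σ + r := by
        have : (0:ℝ) < r := by exact_mod_cast (by omega : 0 < r)
        linarith
      have h2 : (∏ j ∈ range r, (σ + j)) ≤ Qr := by
        have := h1
        rw [hgσ] at this
        have h3 : t * ((∏ j ∈ range r, (σ + j)) * (σ + r)) ≤ t * ((σ + r) * Qr) := by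
          calc t * ((∏ j ∈ range r, (σ + j)) * (σ + r)) = t * g σ := by rw [hgσ]
            _ ≤ t * (σ + r) * Qr := h1
            _ = t * ((σ + r) * Qr) := by ring
        have h4 := le_of_mul_le_mul_left h3 htR
        have h5 : (∏ j ∈ range r, (σ + j)) * (σ + r) ≤ Qr * (σ + r) := by linarith
        exact le_of_mul_le_mul_right h5 hσr_pos
      linarith
    -- conclude
    have hfinal : ∏ j ∈ range (r+1), (q + j) = (q + r) * Qr := by
      rw [hQr_def, Finset.prod_range_succ]; ring
    rw [hfinal]
    calc PN ≤ t * (σ + r) * Qr := HD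
      _ ≤ t * (q + r) * Qr := by
          apply mul_le_mul_of_nonneg_right _ hQr_pos.le
          apply mul_le_mul_of_nonneg_left _ htR.le
          linarith
      _ = t * ((q + r) * Qr) := by ring

end Aux

/-- for `r ≥ 2`, `n ≥ r + 1`, with `q > 0` real defined by
`n = q² + q + r - 1`, we have `cp(n, r) ≥ C(n, r)/C(q + r - 1, r)`. -/
theorem cp_absolute_lower (r n : ℕ) (hr : 2 ≤ r) (hn : r + 1 ≤ n)
    (q : ℝ) (hq : 0 < q) (hnq : (n : ℝ) = q ^ 2 + q + r - 1) :
    rbinom (n : ℝ) r / rbinom (q + r - 1) r ≤ (cp n r : ℝ) := by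
  classical
  open Finset in
  -- the defining set is nonempty
  have hex : IsCliquePartition n r ((Finset.univ : Finset (Fin n)).powersetCard r) := by
    constructor
    · intro A hA
      rw [Finset.mem_powersetCard] at hA
      intro h
      rw [h] at hA
      have h2 := hA.2
      rw [Finset.card_univ, Fintype.card_fin] at h2
      omega
    · intro S hS
      refine ⟨S, ⟨Finset.mem_powersetCard.mpr ⟨Finset.subset_univ S, hS⟩, subset_rfl⟩, ?_⟩
      rintro A ⟨hA, hSA⟩
      rw [Finset.mem_powersetCard] at hA
      exact (Finset.eq_of_subset_of_card_le hSA (by rw [hA.2, hS])).symm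
  have hne : {t | ∃ P : Finset (Finset (Fin n)), IsCliquePartition n r P ∧ P.card = t}.Nonempty :=
    ⟨_, _, hex, rfl⟩
  obtain ⟨P, hP, hPcard⟩ := Nat.sInf_mem hne
  have hP' : IsCP r P := hP
  have hcardfin : Fintype.card (Fin n) = n := Fintype.card_fin n
  have hmain := main_bound r hr (Fin n) P hP' (by rw [hcardfin]; exact hn) q hq
    (by rw [hcardfin]; exact hnq)
  rw [hcardfin, hPcard] at hmain
  -- rewrite the rbinom quotient
  have hdenom : ∏ i ∈ Finset.range r, (q + (r:ℝ) - 1 - i) = ∏ j ∈ Finset.range r, (q + j) := by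
    rw [← Finset.prod_range_reflect]
    apply Finset.prod_congr rfl
    intro j hj
    rw [Finset.mem_range] at hj
    have : ((r - 1 - j : ℕ) : ℝ) = (r:ℝ) - 1 - j := by
      push_cast [Nat.cast_sub (by omega : j ≤ r - 1), Nat.cast_sub (by omega : 1 ≤ r)]
      ring
    rw [this]
    ring
  have hB_pos : (0:ℝ) < ∏ j ∈ Finset.range r, (q + j) := by
    apply Finset.prod_pos
    intro j _
    positivity
  have hfact_pos : (0:ℝ) < (Nat.factorial r : ℝ) := by
    exact_mod_cast Nat.factorial_pos r
  have hquot : rbinom (n : ℝ) r / rbinom (q + r - 1) r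
      = (∏ i ∈ Finset.range r, ((n:ℝ) - i)) / (∏ j ∈ Finset.range r, (q + j)) := by
    unfold rbinom
    have hden : ∏ i ∈ Finset.range r, (q + (r:ℝ) - 1 - (i:ℝ)) = ∏ j ∈ Finset.range r, (q + j) :=
      hdenom
    rw [hden]
    field_simp
  rw [hquot]
  rw [div_le_iff₀ hB_pos]
  exact hmain
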